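/- If x̄ is a local maximizer of f on dom f, or if σ̄ is a local maximizer of D on S⁻, then ‖Hv‖ ≤ 1 for all unit vectors v ∈ ℝᵐ. Conversely, if ‖Hv‖ < 1 for all unit vectors v ∈ ℝᵐ, then x̄ is a strict local maximizer of f and σ̄ is a strict local maximizer of D. In particular, if A_i x̄ = b_i for all i = 1,…,m (equivalently d_i = 0 for all i), then x̄ and σ̄ are strict local maximizers of f and D, respectively. -/

import Mathlib

open Matrix Set

noncomputable section

/-- The quadratic function `x ↦ ½⟨x, A x⟩ − ⟨b, x⟩ + c`. -/
def qf {n : ℕ} (A : Matrix (Fin n) (Fin n) ℝ) (b : Fin n → ℝ) (c : ℝ) (x : Fin n → ℝ) : ℝ :=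
  (1 / 2 : ℝ) * (x ⬝ᵥ A.mulVec x) - b ⬝ᵥ x + c

/-- `A(σ) = A₀ + Σ σ_k A_k`. -/
def Amat {n m : ℕ} (A0 : Matrix (Fin n) (Fin n) ℝ) (A : Fin m → Matrix (Fin n) (Fin n) ℝ)
    (σ : Fin m → ℝ) : Matrix (Fin n) (Fin n) ℝ :=
  A0 + ∑ k, σ k • A k

/-- `b(σ) = b₀ + Σ σ_k b_k`. -/
def bvec {n m : ℕ} (b0 : Fin n → ℝ) (b : Fin m → Fin n → ℝ) (σ : Fin m → ℝ) : Fin n → ℝ :=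
  b0 + ∑ k, σ k • b k

/-- `q(x) = (q₁(x), …, q_m(x))`. -/
def qvec {n m : ℕ} (A : Fin m → Matrix (Fin n) (Fin n) ℝ) (b : Fin m → Fin n → ℝ)
    (c : Fin m → ℝ) (x : Fin n → ℝ) : Fin m → ℝ :=
  fun i => qf (A i) (b i) (c i) x

/-- Subdifferential of an (extended-real-valued) convex function represented by its
finite part `V` and its effective domain `dV`; it is empty outside `dV`. -/
def subdiff {m : ℕ} (V : (Fin m → ℝ) → ℝ) (dV : Set (Fin m → ℝ)) (y : Fin m → ℝ) :
    Set (Fin m → ℝ) :=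
  {σ | y ∈ dV ∧ ∀ y' ∈ dV, (y' - y) ⬝ᵥ σ ≤ V y' - V y}

/-- `V ∈ Γ(ℝᵐ)`: proper, convex and lower semicontinuous (closed epigraph), where the
extended-real-valued function is represented by its finite part `V` on its domain `dV`. -/
def properLscConvex {m : ℕ} (V : (Fin m → ℝ) → ℝ) (dV : Set (Fin m → ℝ)) : Prop :=
  dV.Nonempty ∧ ConvexOn ℝ dV V ∧
    IsClosed {p : (Fin m → ℝ) × ℝ | p.1 ∈ dV ∧ V p.1 ≤ p.2}

/-- `(Vs, dVs)` is the Fenchel conjugate of `(V, dV)`: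
`dVs` is the set where the supremum is finite and `Vs` its value there. -/
def isConjugate {m : ℕ} (V : (Fin m → ℝ) → ℝ) (dV : Set (Fin m → ℝ))
    (Vs : (Fin m → ℝ) → ℝ) (dVs : Set (Fin m → ℝ)) : Prop :=
  dVs = {σ | BddAbove ((fun y => y ⬝ᵥ σ - V y) '' dV)} ∧
    ∀ σ ∈ dVs, Vs σ = sSup ((fun y => y ⬝ᵥ σ - V y) '' dV)

/-- The continuous linear functional `v ↦ ⟨g, v⟩`. -/
def dotCLM {k : ℕ} (g : Fin k → ℝ) : (Fin k → ℝ) →L[ℝ] ℝ :=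
  LinearMap.toContinuousLinearMap
    { toFun := fun v => g ⬝ᵥ v
      map_add' := fun u v => by simp [dotProduct_add]
      map_smul' := fun t v => by simp [dotProduct_smul, smul_eq_mul] }

/-- The continuous linear map `v ↦ M v`. -/
def matCLM {k l : ℕ} (M : Matrix (Fin l) (Fin k) ℝ) : (Fin k → ℝ) →L[ℝ] (Fin l → ℝ) :=
  LinearMap.toContinuousLinearMap M.mulVecLin

/-- `V ∈ Γ_sc(ℝᵐ)`: a proper lsc convex function of Legendre type, i.e. essentially smooth
(differentiable on the nonempty interior of its domain, with gradient `gV`, and with empty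
subdifferential outside this interior) and essentially strictly convex. -/
def LegendreType {m : ℕ} (V : (Fin m → ℝ) → ℝ) (dV : Set (Fin m → ℝ))
    (gV : (Fin m → ℝ) → (Fin m → ℝ)) : Prop :=
  (interior dV).Nonempty ∧
  (∀ y ∈ interior dV, HasFDerivAt V (dotCLM (gV y)) y) ∧
  (∀ y, y ∉ interior dV → subdiff V dV y = ∅) ∧
  StrictConvexOn ℝ (interior dV) V

/-- The primal function `f = q₀ + V ∘ q`. -/
def fP {n m : ℕ} (A0 : Matrix (Fin n) (Fin n) ℝ) (b0 : Fin n → ℝ)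
    (A : Fin m → Matrix (Fin n) (Fin n) ℝ) (b : Fin m → Fin n → ℝ) (c : Fin m → ℝ)
    (V : (Fin m → ℝ) → ℝ) (x : Fin n → ℝ) : ℝ :=
  qf A0 b0 0 x + V (qvec A b c x)

/-- The gradient of the primal function `f` (valid on `X₀`):
`∇f(x) = A₀x − b₀ + Σ_i (∂V/∂y_i)(q(x)) (A_i x − b_i)`. -/
def gradfP {n m : ℕ} (A0 : Matrix (Fin n) (Fin n) ℝ) (b0 : Fin n → ℝ)
    (A : Fin m → Matrix (Fin n) (Fin n) ℝ) (b : Fin m → Fin n → ℝ) (c : Fin m → ℝ)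
    (gV : (Fin m → ℝ) → (Fin m → ℝ)) (x : Fin n → ℝ) : Fin n → ℝ :=
  A0 *ᵥ x - b0 + ∑ i, gV (qvec A b c x) i • ((A i) *ᵥ x - b i)

/-- `x(σ) = A(σ)⁻¹ b(σ)`. -/
def xofσ {n m : ℕ} (A0 : Matrix (Fin n) (Fin n) ℝ) (A : Fin m → Matrix (Fin n) (Fin n) ℝ)
    (b0 : Fin n → ℝ) (b : Fin m → Fin n → ℝ) (σ : Fin m → ℝ) : Fin n → ℝ :=
  (Amat A0 A σ)⁻¹ *ᵥ bvec b0 b σ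

/-- The dual function `D(σ) = Ξ(A(σ)⁻¹b(σ), σ)`. -/
def Dfun {n m : ℕ} (A0 : Matrix (Fin n) (Fin n) ℝ) (b0 : Fin n → ℝ)
    (A : Fin m → Matrix (Fin n) (Fin n) ℝ) (b : Fin m → Fin n → ℝ) (c : Fin m → ℝ)
    (Vs : (Fin m → ℝ) → ℝ) (σ : Fin m → ℝ) : ℝ :=
  qf A0 b0 0 (xofσ A0 A b0 b σ) + qvec A b c (xofσ A0 A b0 b σ) ⬝ᵥ σ - Vs σ

/-- The gradient of the dual function `D`: `∇D(σ) = q(x(σ)) − ∇V*(σ)`. -/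
def gradD {n m : ℕ} (A0 : Matrix (Fin n) (Fin n) ℝ) (b0 : Fin n → ℝ)
    (A : Fin m → Matrix (Fin n) (Fin n) ℝ) (b : Fin m → Fin n → ℝ) (c : Fin m → ℝ)
    (gVs : (Fin m → ℝ) → (Fin m → ℝ)) (σ : Fin m → ℝ) : Fin m → ℝ :=
  qvec A b c (xofσ A0 A b0 b σ) - gVs σ

/-- The matrix of the linear map `J : ℝᵐ → ℝⁿ`, `Jv = Σ_i v_i d_i`, whose columns are the
vectors `d_i = (E⁻¹)ᵀ(A_i x̄ − b_i)`. -/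
def Jmat {n m : ℕ} (A : Fin m → Matrix (Fin n) (Fin n) ℝ) (b : Fin m → Fin n → ℝ)
    (E : Matrix (Fin n) (Fin n) ℝ) (xb : Fin n → ℝ) : Matrix (Fin n) (Fin m) ℝ :=
  Matrix.of fun i k => ((E⁻¹)ᵀ *ᵥ ((A k) *ᵥ xb - b k)) i

/-- The matrix of `H = J ∘ Fᵀ : ℝᵐ → ℝⁿ`; its adjoint `H* = F ∘ Jᵀ` has matrix `Hᵀ`. -/
def Hmat {n m : ℕ} (A : Fin m → Matrix (Fin n) (Fin n) ℝ) (b : Fin m → Fin n → ℝ)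
    (E : Matrix (Fin n) (Fin n) ℝ) (F : Matrix (Fin m) (Fin m) ℝ) (xb : Fin n → ℝ) :
    Matrix (Fin n) (Fin m) ℝ :=
  Jmat A b E xb * Fᵀ

/-- `a` is a strict local maximizer of `f` on `s`. -/
def IsStrictLocalMaxOn {α : Type*} [TopologicalSpace α] (f : α → ℝ) (s : Set α) (a : α) :
    Prop :=
  ∃ U ∈ nhds a, ∀ x ∈ U ∩ s, x ≠ a → f x < f a

/-- `a` is a strict local minimizer of `f` on `s`. -/
def IsStrictLocalMinOn {α : Type*} [TopologicalSpace α] (f : α → ℝ) (s : Set α) (a : α) :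
    Prop :=
  ∃ U ∈ nhds a, ∀ x ∈ U ∩ s, x ≠ a → f a < f x

/-! ### Helper lemmas: dot products, norms, compactness -/

section DotHelpers
open Matrix

lemma dot_nonneg' {k : ℕ} (u : Fin k → ℝ) : 0 ≤ u ⬝ᵥ u :=
  Finset.sum_nonneg fun _ _ => mul_self_nonneg _

lemma dot_pos' {k : ℕ} {u : Fin k → ℝ} (h : u ≠ 0) : 0 < u ⬝ᵥ u :=
  (dot_nonneg' u).lt_of_ne fun h0 => h (dotProduct_self_eq_zero.mp h0.symm)

lemma dot_cs {k : ℕ} (u v : Fin k → ℝ) : (u ⬝ᵥ v) ^ 2 ≤ (u ⬝ᵥ u) * (v ⬝ᵥ v) := by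
  simpa [dotProduct, pow_two] using Finset.sum_mul_sq_le_sq_mul_sq Finset.univ u v

lemma abs_dot_le {k : ℕ} (g v : Fin k → ℝ) : |g ⬝ᵥ v| ≤ ((k : ℝ) * ‖g‖) * ‖v‖ := by
  calc |g ⬝ᵥ v| ≤ ∑ i, |g i * v i| := Finset.abs_sum_le_sum_abs _ _
    _ ≤ ∑ _i : Fin k, ‖g‖ * ‖v‖ := by
        refine Finset.sum_le_sum fun i _ => ?_
        rw [abs_mul]
        exact mul_le_mul (norm_le_pi_norm g i) (norm_le_pi_norm v i) (abs_nonneg _)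
          (norm_nonneg _)
    _ = ((k : ℝ) * ‖g‖) * ‖v‖ := by
        simp [Finset.sum_const, mul_assoc]

@[simp] lemma dotCLM_apply {k : ℕ} (g v : Fin k → ℝ) : dotCLM g v = g ⬝ᵥ v := rfl

@[simp] lemma matCLM_apply {k l : ℕ} (M : Matrix (Fin l) (Fin k) ℝ) (v : Fin k → ℝ) :
    matCLM M v = M *ᵥ v := rfl

lemma norm_dotCLM_le {k : ℕ} (g : Fin k → ℝ) : ‖dotCLM g‖ ≤ (k : ℝ) * ‖g‖ :=
  ContinuousLinearMap.opNorm_le_bound _ (by positivity) fun v => by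
    simpa [Real.norm_eq_abs] using abs_dot_le g v

lemma norm_sq_le_dot {k : ℕ} (u : Fin k → ℝ) : ‖u‖ ^ 2 ≤ u ⬝ᵥ u := by
  have h1 : ‖u‖ ≤ Real.sqrt (u ⬝ᵥ u) := by
    refine pi_norm_le_iff_of_nonneg (Real.sqrt_nonneg _) |>.mpr fun i => ?_
    rw [Real.norm_eq_abs, ← Real.sqrt_sq_eq_abs]
    refine Real.sqrt_le_sqrt ?_
    rw [pow_two]
    exact Finset.single_le_sum (f := fun j => u j * u j)
      (fun j _ => mul_self_nonneg _) (Finset.mem_univ i)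
  calc ‖u‖ ^ 2 ≤ Real.sqrt (u ⬝ᵥ u) ^ 2 := by
        exact pow_le_pow_left₀ (norm_nonneg _) h1 2
    _ = u ⬝ᵥ u := Real.sq_sqrt (dot_nonneg' u)

lemma cont_dot {k : ℕ} : Continuous fun u : Fin k → ℝ => u ⬝ᵥ u := by
  unfold dotProduct
  exact continuous_finset_sum _ fun i _ => (continuous_apply i).mul (continuous_apply i)

lemma cont_quadform {k : ℕ} (M : Matrix (Fin k) (Fin k) ℝ) :
    Continuous fun u : Fin k → ℝ => u ⬝ᵥ M *ᵥ u := by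
  unfold dotProduct Matrix.mulVec
  exact continuous_finset_sum _ fun i _ => (continuous_apply i).mul
    (continuous_finset_sum _ fun j _ => (continuous_const.mul (continuous_apply j)))

lemma exists_min_on_sphere {k : ℕ} (hk : 0 < k) (f : (Fin k → ℝ) → ℝ) (hf : Continuous f) :
    ∃ u₀, u₀ ⬝ᵥ u₀ = 1 ∧ ∀ u, u ⬝ᵥ u = 1 → f u₀ ≤ f u := by
  have hclosed : IsClosed {u : Fin k → ℝ | u ⬝ᵥ u = 1} :=
    isClosed_singleton.preimage cont_dot
  have hsub : {u : Fin k → ℝ | u ⬝ᵥ u = 1} ⊆ Metric.closedBall 0 1 := by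
    intro u hu
    have h1 : u ⬝ᵥ u = 1 := hu
    rw [Metric.mem_closedBall, dist_zero_right]
    nlinarith [norm_sq_le_dot u, norm_nonneg u, h1]
  have hcpt : IsCompact {u : Fin k → ℝ | u ⬝ᵥ u = 1} :=
    (isCompact_closedBall (0 : Fin k → ℝ) 1).of_isClosed_subset hclosed hsub
  have hne : ({u : Fin k → ℝ | u ⬝ᵥ u = 1}).Nonempty := by
    refine ⟨Pi.single ⟨0, hk⟩ 1, ?_⟩
    simp [dotProduct, Pi.single_apply]
  obtain ⟨u₀, hu₀, hmin⟩ := hcpt.exists_isMinOn hne hf.continuousOn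
  exact ⟨u₀, hu₀, fun u hu => hmin hu⟩

lemma dot_smul_self {k : ℕ} (t : ℝ) (u : Fin k → ℝ) :
    (t • u) ⬝ᵥ (t • u) = t * t * (u ⬝ᵥ u) := by
  rw [smul_dotProduct, dotProduct_smul, smul_eq_mul, smul_eq_mul]; ring

lemma quadform_smul {k l : ℕ} (M : Matrix (Fin k) (Fin l) ℝ) (t : ℝ) (u : Fin l → ℝ)
    (z : Fin k → ℝ) : (t • z) ⬝ᵥ M *ᵥ (t • u) = t * t * (z ⬝ᵥ M *ᵥ u) := by
  rw [Matrix.mulVec_smul, smul_dotProduct, dotProduct_smul,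
    smul_eq_mul, smul_eq_mul]; ring

lemma quad_scale {k : ℕ} (g : (Fin k → ℝ) → ℝ)
    (hg : ∀ (t : ℝ) (u : Fin k → ℝ), 0 < t → g (t • u) = t * t * g u)
    (hg0 : g 0 = 0) {c : ℝ}
    (h : ∀ v, v ⬝ᵥ v = 1 → c ≤ g v) : ∀ u, c * (u ⬝ᵥ u) ≤ g u := by
  intro u
  rcases eq_or_ne u 0 with h0 | h0
  · simp [h0, hg0]
  · have htpos : 0 < Real.sqrt (u ⬝ᵥ u) := Real.sqrt_pos.mpr (dot_pos' h0)
    set t := Real.sqrt (u ⬝ᵥ u) with hts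
    have htt : t * t = u ⬝ᵥ u := Real.mul_self_sqrt (dot_nonneg' u)
    have hu : u = t • (t⁻¹ • u) := by rw [smul_smul, mul_inv_cancel₀ htpos.ne', one_smul]
    have hw1 : (t⁻¹ • u) ⬝ᵥ (t⁻¹ • u) = 1 := by
      rw [dot_smul_self]
      field_simp
      nlinarith [htt]
    have hineq := h _ hw1
    have h2 : g u = t * t * g (t⁻¹ • u) := by
      conv_lhs => rw [hu]
      rw [hg _ _ htpos]
    have h3 : c * (u ⬝ᵥ u) = t * t * c := by rw [← htt]; ring
    rw [h2, h3]
    nlinarith [mul_pos htpos htpos]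

lemma scale_bound {k l : ℕ} (Hm : Matrix (Fin k) (Fin l) ℝ) {ρ : ℝ} (hρ : 0 ≤ ρ)
    (h : ∀ v, v ⬝ᵥ v = 1 → (Hm *ᵥ v) ⬝ᵥ (Hm *ᵥ v) ≤ ρ) :
    ∀ v, (Hm *ᵥ v) ⬝ᵥ (Hm *ᵥ v) ≤ ρ * (v ⬝ᵥ v) := by
  intro v
  have := quad_scale (fun v => ρ * (v ⬝ᵥ v) - (Hm *ᵥ v) ⬝ᵥ (Hm *ᵥ v))
    (fun t u ht => by
      simp only [dot_smul_self, Matrix.mulVec_smul, dot_smul_self]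
      ring)
    (by simp [Matrix.mulVec_zero])
    (c := 0) (fun w hw => by
      have := h w hw
      simp only [hw, mul_one]
      linarith) v
  simpa using this

lemma aux_transfer {k l : ℕ} (Hm : Matrix (Fin k) (Fin l) ℝ) {ρ : ℝ} (hρ : 0 ≤ ρ)
    (h : ∀ v : Fin l → ℝ, (Hm *ᵥ v) ⬝ᵥ (Hm *ᵥ v) ≤ ρ * (v ⬝ᵥ v)) :
    ∀ w : Fin k → ℝ, (Hmᵀ *ᵥ w) ⬝ᵥ (Hmᵀ *ᵥ w) ≤ ρ * (w ⬝ᵥ w) := by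
  intro w
  set s := (Hmᵀ *ᵥ w) ⬝ᵥ (Hmᵀ *ᵥ w) with hs
  have hs0 : 0 ≤ s := dot_nonneg' _
  rcases hs0.eq_or_lt with h0 | h0
  · rw [← h0]; exact mul_nonneg hρ (dot_nonneg' _)
  · have key : s = w ⬝ᵥ (Hm *ᵥ (Hmᵀ *ᵥ w)) := by
      rw [Matrix.dotProduct_mulVec w Hm, ← Matrix.mulVec_transpose]
    have hcs : s ^ 2 ≤ (w ⬝ᵥ w) * ((Hm *ᵥ (Hmᵀ *ᵥ w)) ⬝ᵥ (Hm *ᵥ (Hmᵀ *ᵥ w))) := by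
      rw [key]; exact dot_cs _ _
    have hb := h (Hmᵀ *ᵥ w)
    nlinarith [dot_nonneg' w]

lemma posdef_lower {k : ℕ} {M : Matrix (Fin k) (Fin k) ℝ} (hM : M.PosDef) :
    ∃ c > 0, ∀ u, c * (u ⬝ᵥ u) ≤ u ⬝ᵥ M *ᵥ u := by
  rcases Nat.eq_zero_or_pos k with hk | hk
  · subst hk
    refine ⟨1, one_pos, fun u => ?_⟩
    simp [dotProduct]
  · obtain ⟨u₀, hu₀, hmin⟩ := exists_min_on_sphere hk _ (cont_quadform M)
    have hu₀ne : u₀ ≠ 0 := fun h => by simp [h, zero_dotProduct] at hu₀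
    have hc : 0 < u₀ ⬝ᵥ M *ᵥ u₀ := by
      have := hM.dotProduct_mulVec_pos hu₀ne
      simpa using this
    refine ⟨u₀ ⬝ᵥ M *ᵥ u₀, hc, ?_⟩
    exact quad_scale _ (fun t u ht => quadform_smul M t u u)
      (by simp [Matrix.mulVec_zero]) hmin

end DotHelpers

/-! ### Derivative helpers -/

section DerivHelpers
open Matrix

lemma dot_mulVec_swap {k l : ℕ} (M : Matrix (Fin k) (Fin l) ℝ) (z : Fin k → ℝ)
    (u : Fin l → ℝ) : z ⬝ᵥ M *ᵥ u = (Mᵀ *ᵥ z) ⬝ᵥ u := by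
  rw [Matrix.dotProduct_mulVec, Matrix.mulVec_transpose]

lemma dot_gram {k l : ℕ} (E : Matrix (Fin k) (Fin l) ℝ) (u : Fin l → ℝ) :
    u ⬝ᵥ (Eᵀ * E) *ᵥ u = (E *ᵥ u) ⬝ᵥ (E *ᵥ u) := by
  rw [← Matrix.mulVec_mulVec, dot_mulVec_swap, Matrix.transpose_transpose]

lemma quad_expand {k : ℕ} (M : Matrix (Fin k) (Fin k) ℝ) (x h : Fin k → ℝ) :
    (x + h) ⬝ᵥ M *ᵥ (x + h) =
      x ⬝ᵥ M *ᵥ x + (M *ᵥ x + Mᵀ *ᵥ x) ⬝ᵥ h + h ⬝ᵥ M *ᵥ h := by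
  simp only [Matrix.mulVec_add, dotProduct_add, add_dotProduct]
  rw [dot_mulVec_swap M x h, show h ⬝ᵥ M *ᵥ x = (M *ᵥ x) ⬝ᵥ h from dotProduct_comm _ _]
  ring

lemma abs_dot_mulVec_le {k l : ℕ} (M : Matrix (Fin k) (Fin l) ℝ) (z : Fin k → ℝ)
    (u : Fin l → ℝ) : |z ⬝ᵥ M *ᵥ u| ≤ (∑ i, ∑ j, |M i j|) * ‖z‖ * ‖u‖ := by
  have key : z ⬝ᵥ M *ᵥ u = ∑ i, z i * ∑ j, M i j * u j := rfl
  rw [key]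
  calc |∑ i, z i * ∑ j, M i j * u j| ≤ ∑ i, |z i * ∑ j, M i j * u j| :=
        Finset.abs_sum_le_sum_abs _ _
    _ ≤ ∑ i, ∑ j, |M i j| * (‖z‖ * ‖u‖) := by
        refine Finset.sum_le_sum fun i _ => ?_
        rw [abs_mul]
        calc |z i| * |∑ j, M i j * u j| ≤ ‖z‖ * ∑ j, |M i j| * ‖u‖ := by
              refine mul_le_mul (norm_le_pi_norm z i) ?_ (abs_nonneg _) (norm_nonneg _)
              calc |∑ j, M i j * u j| ≤ ∑ j, |M i j * u j| := Finset.abs_sum_le_sum_abs _ _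
                _ ≤ ∑ j, |M i j| * ‖u‖ := Finset.sum_le_sum fun j _ => by
                    rw [abs_mul]
                    exact mul_le_mul_of_nonneg_left (norm_le_pi_norm u j) (abs_nonneg _)
          _ = ∑ j, |M i j| * (‖z‖ * ‖u‖) := by
              rw [Finset.mul_sum]
              exact Finset.sum_congr rfl fun j _ => by ring
    _ = (∑ i, ∑ j, |M i j|) * ‖z‖ * ‖u‖ := by
        rw [Finset.sum_mul, Finset.sum_mul]
        refine Finset.sum_congr rfl fun i _ => ?_
        rw [Finset.sum_mul, Finset.sum_mul]
        exact Finset.sum_congr rfl fun j _ => by ring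

lemma norm_sq_littleO {k : ℕ} :
    (fun h : Fin k → ℝ => ‖h‖ * ‖h‖) =o[nhds 0] fun h => h := by
  rw [Asymptotics.isLittleO_iff]
  intro c hc
  have htend : Filter.Tendsto (fun h : Fin k → ℝ => ‖h‖) (nhds 0) (nhds 0) := by
    simpa using tendsto_norm_zero.comp (Filter.tendsto_id (α := Fin k → ℝ))
  filter_upwards [htend.eventually_le_const hc] with h hh
  have : ‖h‖ * ‖h‖ ≤ c * ‖h‖ := mul_le_mul_of_nonneg_right hh (norm_nonneg _)
  simpa [abs_of_nonneg (mul_nonneg (norm_nonneg h) (norm_nonneg h))] using this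

lemma quadform_littleO {k : ℕ} (M : Matrix (Fin k) (Fin k) ℝ) :
    (fun h : Fin k → ℝ => h ⬝ᵥ M *ᵥ h) =o[nhds 0] fun h => h := by
  have hO : (fun h : Fin k → ℝ => h ⬝ᵥ M *ᵥ h) =O[nhds 0] fun h => ‖h‖ * ‖h‖ := by
    refine Asymptotics.IsBigO.of_bound (∑ i, ∑ j, |M i j|) ?_
    filter_upwards with h
    have := abs_dot_mulVec_le M h h
    calc ‖h ⬝ᵥ M *ᵥ h‖ = |h ⬝ᵥ M *ᵥ h| := rfl
      _ ≤ (∑ i, ∑ j, |M i j|) * ‖h‖ * ‖h‖ := this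
      _ = (∑ i, ∑ j, |M i j|) * ‖(fun h => ‖h‖ * ‖h‖) h‖ := by
          simp [abs_of_nonneg (mul_nonneg (norm_nonneg h) (norm_nonneg h)), mul_assoc,
            Real.norm_eq_abs]
  exact hO.trans_isLittleO norm_sq_littleO

lemma hasFDerivAt_quadform {k : ℕ} (M : Matrix (Fin k) (Fin k) ℝ) (x : Fin k → ℝ) :
    HasFDerivAt (fun y => y ⬝ᵥ M *ᵥ y) (dotCLM (M *ᵥ x + Mᵀ *ᵥ x)) x := by
  rw [hasFDerivAt_iff_isLittleO_nhds_zero]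
  have heq : (fun h => (x + h) ⬝ᵥ M *ᵥ (x + h) - x ⬝ᵥ M *ᵥ x - dotCLM (M *ᵥ x + Mᵀ *ᵥ x) h)
      = fun h : Fin k → ℝ => h ⬝ᵥ M *ᵥ h := by
    funext h
    rw [dotCLM_apply, quad_expand]
    ring
  rw [heq]
  exact quadform_littleO M

lemma hasFDerivAt_qf {k : ℕ} {A : Matrix (Fin k) (Fin k) ℝ} (hA : A.IsSymm)
    (b : Fin k → ℝ) (c : ℝ) (x : Fin k → ℝ) :
    HasFDerivAt (qf A b c) (dotCLM (A *ᵥ x - b)) x := by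
  have h1 : HasFDerivAt (fun y : Fin k → ℝ => (1 / 2 : ℝ) * (y ⬝ᵥ A *ᵥ y))
      ((1 / 2 : ℝ) • dotCLM (A *ᵥ x + Aᵀ *ᵥ x)) x := (hasFDerivAt_quadform A x).const_mul _
  have h2 : HasFDerivAt (fun y : Fin k → ℝ => b ⬝ᵥ y) (dotCLM b) x := (dotCLM b).hasFDerivAt
  have h3 := (h1.sub h2).add_const c
  have heq : (1 / 2 : ℝ) • dotCLM (A *ᵥ x + Aᵀ *ᵥ x) - dotCLM b = dotCLM (A *ᵥ x - b) := by
    refine ContinuousLinearMap.ext fun v => ?_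
    simp only [ContinuousLinearMap.sub_apply, ContinuousLinearMap.smul_apply, dotCLM_apply,
      add_dotProduct, sub_dotProduct, smul_eq_mul, hA.eq]
    ring
  rw [heq] at h3
  exact h3

/-- Matrix with rows `A i *ᵥ x - b i`. -/
def Gmat {n m : ℕ} (A : Fin m → Matrix (Fin n) (Fin n) ℝ) (b : Fin m → Fin n → ℝ)
    (x : Fin n → ℝ) : Matrix (Fin m) (Fin n) ℝ :=
  Matrix.of fun i => (A i) *ᵥ x - b i

lemma hasFDerivAt_qvec {n m : ℕ} {A : Fin m → Matrix (Fin n) (Fin n) ℝ}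
    (hA : ∀ i, (A i).IsSymm) (b : Fin m → Fin n → ℝ) (c : Fin m → ℝ) (x : Fin n → ℝ) :
    HasFDerivAt (qvec A b c) (matCLM (Gmat A b x)) x := by
  have h := hasFDerivAt_pi.mpr (fun i => hasFDerivAt_qf (hA i) (b i) (c i) x)
  have heq : (ContinuousLinearMap.pi fun i => dotCLM ((A i) *ᵥ x - b i)) =
      matCLM (Gmat A b x) := by
    refine ContinuousLinearMap.ext fun v => funext fun i => ?_
    simp only [ContinuousLinearMap.pi_apply, dotCLM_apply, matCLM_apply]
    rfl
  rw [heq] at h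
  exact h

lemma transpose_mulVec_eq_sum {k l : ℕ} (M : Matrix (Fin k) (Fin l) ℝ) (z : Fin k → ℝ) :
    Mᵀ *ᵥ z = ∑ i, z i • M i := by
  funext j
  simp [Matrix.mulVec, dotProduct, Matrix.transpose_apply, Finset.sum_apply,
    mul_comm]

end DerivHelpers

/-! ### Quadratic Taylor expansion and second-order conditions -/

section Taylor
open Matrix

lemma seg_norm_le {k : ℕ} {a x y : Fin k → ℝ} (hy : y ∈ segment ℝ a x) :
    ‖y - a‖ ≤ ‖x - a‖ := by
  obtain ⟨ta, tb, hta, htb, hsum, hy⟩ := hy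
  have hya : y - a = tb • (x - a) := by
    rw [← hy, show ta = 1 - tb by linarith]
    module
  rw [hya, norm_smul, Real.norm_eq_abs, abs_of_nonneg htb]
  nlinarith [norm_nonneg (x - a)]

lemma taylor_quad {k : ℕ} {f : (Fin k → ℝ) → ℝ} {g : (Fin k → ℝ) → Fin k → ℝ}
    {Q : Matrix (Fin k) (Fin k) ℝ} {a : Fin k → ℝ} (hQ : Qᵀ = Q) {r : ℝ} (hr : 0 < r)
    (hf : ∀ x ∈ Metric.ball a r, HasFDerivAt f (dotCLM (g x)) x)
    (hg : HasFDerivAt g (matCLM Q) a) (hga : g a = 0) :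
    ∀ ε > 0, ∃ δ > 0, δ ≤ r ∧ ∀ x, dist x a < δ →
      |f x - f a - (1 / 2) * ((x - a) ⬝ᵥ Q *ᵥ (x - a))| ≤ ε * ‖x - a‖ ^ 2 := by
  intro ε hε
  set ε' : ℝ := ε / (k + 1) with hε'def
  have hε' : 0 < ε' := by positivity
  have hlo := hg.isLittleO.def hε'
  rw [Metric.eventually_nhds_iff] at hlo
  obtain ⟨δ₁, hδ₁, hlo⟩ := hlo
  refine ⟨min δ₁ r, lt_min hδ₁ hr, min_le_right _ _, fun x hx => ?_⟩
  set φ : (Fin k → ℝ) → ℝ := fun y => f y - (1 / 2) * ((y - a) ⬝ᵥ Q *ᵥ (y - a)) with hφdef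
  have hsegball : ∀ y ∈ segment ℝ a x, y ∈ Metric.ball a r := by
    intro y hy
    rw [Metric.mem_ball, dist_eq_norm]
    calc ‖y - a‖ ≤ ‖x - a‖ := seg_norm_le hy
      _ < r := lt_of_lt_of_le (by rwa [dist_eq_norm] at hx) (min_le_right _ _)
  have hφderiv : ∀ y ∈ segment ℝ a x,
      HasFDerivAt φ (dotCLM (g y - Q *ᵥ (y - a))) y := by
    intro y hy
    have h1 := hf y (hsegball y hy)
    have h2 : HasFDerivAt (fun y => (y - a) ⬝ᵥ Q *ᵥ (y - a))
        (dotCLM (Q *ᵥ (y - a) + Qᵀ *ᵥ (y - a))) y := by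
      have hin : HasFDerivAt (fun y : Fin k → ℝ => y - a) (ContinuousLinearMap.id ℝ _) y :=
        (hasFDerivAt_id y).sub_const a
      have h4 := (hasFDerivAt_quadform Q (y - a)).comp y hin
      rw [ContinuousLinearMap.comp_id] at h4
      exact h4
    have h3 := h1.sub (h2.const_mul (1 / 2))
    have heq : dotCLM (g y) - (1 / 2 : ℝ) • dotCLM (Q *ᵥ (y - a) + Qᵀ *ᵥ (y - a)) =
        dotCLM (g y - Q *ᵥ (y - a)) := by
      refine ContinuousLinearMap.ext fun v => ?_
      simp only [ContinuousLinearMap.sub_apply, ContinuousLinearMap.smul_apply, dotCLM_apply,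
        add_dotProduct, sub_dotProduct, smul_eq_mul, hQ]
      ring
    rw [heq] at h3
    exact h3
  have hbound : ∀ y ∈ segment ℝ a x,
      ‖dotCLM (g y - Q *ᵥ (y - a))‖ ≤ (k : ℝ) * ε' * ‖x - a‖ := by
    intro y hy
    have h1 : ‖g y - Q *ᵥ (y - a)‖ ≤ ε' * ‖y - a‖ := by
      have hda : dist y a < δ₁ := by
        rw [dist_eq_norm]
        calc ‖y - a‖ ≤ ‖x - a‖ := seg_norm_le hy
          _ < δ₁ := lt_of_lt_of_le (by rwa [dist_eq_norm] at hx) (min_le_left _ _)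
      have := hlo hda
      simpa [hga, matCLM_apply] using this
    calc ‖dotCLM (g y - Q *ᵥ (y - a))‖ ≤ (k : ℝ) * ‖g y - Q *ᵥ (y - a)‖ := norm_dotCLM_le _
      _ ≤ (k : ℝ) * (ε' * ‖y - a‖) := by
          exact mul_le_mul_of_nonneg_left h1 (Nat.cast_nonneg k)
      _ ≤ (k : ℝ) * ε' * ‖x - a‖ := by
          rw [mul_assoc]
          refine mul_le_mul_of_nonneg_left ?_ (Nat.cast_nonneg k)
          exact mul_le_mul_of_nonneg_left (seg_norm_le hy) hε'.le
  have hmv := Convex.norm_image_sub_le_of_norm_hasFDerivWithin_le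
    (f := φ) (f' := fun y => dotCLM (g y - Q *ᵥ (y - a))) (C := (k : ℝ) * ε' * ‖x - a‖)
    (s := segment ℝ a x) (x := a) (y := x)
    (fun y hy => (hφderiv y hy).hasFDerivWithinAt) hbound (convex_segment a x)
    (left_mem_segment ℝ a x) (right_mem_segment ℝ a x)
  have hφa : φ a = f a := by simp [hφdef]
  have : |f x - f a - (1 / 2) * ((x - a) ⬝ᵥ Q *ᵥ (x - a))| = ‖φ x - φ a‖ := by
    rw [hφa, hφdef, Real.norm_eq_abs]
    ring_nf
  rw [this]
  calc ‖φ x - φ a‖ ≤ (k : ℝ) * ε' * ‖x - a‖ * ‖x - a‖ := hmv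
    _ ≤ ε * ‖x - a‖ ^ 2 := by
        have hk : (k : ℝ) * ε' ≤ ε := by
          rw [hε'def]
          rw [div_eq_inv_mul, ← mul_assoc]
          have h1 : (k : ℝ) * ((k : ℝ) + 1)⁻¹ ≤ 1 := by
            rw [mul_inv_le_iff₀ (by positivity)]
            simp
          nlinarith [hε.le]
        have h2 : ‖x - a‖ * ‖x - a‖ = ‖x - a‖ ^ 2 := (pow_two _).symm
        nlinarith [norm_nonneg (x - a), sq_nonneg ‖x - a‖, mul_le_mul_of_nonneg_right hk
          (mul_nonneg (norm_nonneg (x - a)) (norm_nonneg (x - a)))]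

lemma strict_max_of_negdef {k : ℕ} {f : (Fin k → ℝ) → ℝ} {g : (Fin k → ℝ) → Fin k → ℝ}
    {Q : Matrix (Fin k) (Fin k) ℝ} {a : Fin k → ℝ} (hQ : Qᵀ = Q) {r : ℝ} (hr : 0 < r)
    (hf : ∀ x ∈ Metric.ball a r, HasFDerivAt f (dotCLM (g x)) x)
    (hg : HasFDerivAt g (matCLM Q) a) (hga : g a = 0) {c : ℝ} (hc : 0 < c)
    (hneg : ∀ u, u ⬝ᵥ Q *ᵥ u ≤ -(c * (u ⬝ᵥ u))) :
    ∃ U ∈ nhds a, ∀ x ∈ U, x ≠ a → f x < f a := by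
  obtain ⟨δ, hδ, _, htay⟩ := taylor_quad hQ hr hf hg hga (c / 8) (by positivity)
  refine ⟨Metric.ball a δ, Metric.ball_mem_nhds a hδ, fun x hx hxa => ?_⟩
  have hu : x - a ≠ 0 := sub_ne_zero.mpr hxa
  have h1 := htay x hx
  have h2 := hneg (x - a)
  have h3 := norm_sq_le_dot (x - a)
  have h4 := dot_pos' hu
  have h5 := abs_le.mp h1
  nlinarith [sq_nonneg ‖x - a‖]

lemma negsemidef_of_localmax {k : ℕ} {f : (Fin k → ℝ) → ℝ} {g : (Fin k → ℝ) → Fin k → ℝ}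
    {Q : Matrix (Fin k) (Fin k) ℝ} {a : Fin k → ℝ} (hQ : Qᵀ = Q) {r : ℝ} (hr : 0 < r)
    (hf : ∀ x ∈ Metric.ball a r, HasFDerivAt f (dotCLM (g x)) x)
    (hg : HasFDerivAt g (matCLM Q) a) (hga : g a = 0)
    {δ₂ : ℝ} (hδ₂ : 0 < δ₂) (hmax : ∀ x ∈ Metric.ball a δ₂, f x ≤ f a) :
    ∀ u, u ⬝ᵥ Q *ᵥ u ≤ 0 := by
  intro u
  have key : ∀ ε > 0, u ⬝ᵥ Q *ᵥ u ≤ 2 * ε * ‖u‖ ^ 2 := by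
    intro ε hε
    obtain ⟨δ, hδ, _, htay⟩ := taylor_quad hQ hr hf hg hga ε hε
    set t : ℝ := min δ δ₂ / (2 * (‖u‖ + 1)) with htdef
    have ht : 0 < t := by positivity
    have htu : t * ‖u‖ < min δ δ₂ := by
      have h1 : t * ‖u‖ ≤ t * (‖u‖ + 1) := by nlinarith
      have h2 : t * (‖u‖ + 1) = min δ δ₂ / 2 := by
        rw [htdef]; field_simp
      have h3 : 0 < min δ δ₂ := lt_min hδ hδ₂
      nlinarith
    set x : Fin k → ℝ := a + t • u with hxdef
    have hxa : x - a = t • u := by rw [hxdef]; abel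
    have hdist : dist x a = t * ‖u‖ := by
      rw [dist_eq_norm, hxa, norm_smul, Real.norm_eq_abs, abs_of_pos ht]
    have hfx : f x ≤ f a := hmax x (by
      rw [Metric.mem_ball, hdist]
      exact lt_of_lt_of_le htu (min_le_right _ _))
    have h1 := htay x (by rw [hdist]; exact lt_of_lt_of_le htu (min_le_left _ _))
    rw [hxa] at h1
    rw [quadform_smul] at h1
    have h2 : ‖t • u‖ ^ 2 = t ^ 2 * ‖u‖ ^ 2 := by
      rw [norm_smul, Real.norm_eq_abs, abs_of_pos ht, mul_pow]
    rw [h2] at h1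
    have h5 := abs_le.mp h1
    have ht2 : 0 < t ^ 2 := by positivity
    nlinarith [h5.2, hfx]
  by_contra h
  push_neg at h
  set s := ‖u‖ ^ 2 with hsdef
  set ε := u ⬝ᵥ Q *ᵥ u / (4 * (s + 1)) with hεdef
  have hs : 0 ≤ s := sq_nonneg _
  have hεpos : 0 < ε := div_pos h (by positivity)
  have hX : ε * (4 * (s + 1)) = u ⬝ᵥ Q *ᵥ u := by
    rw [hεdef]; field_simp
  have hk := key ε hεpos
  nlinarith [hs, hεpos]

end Taylor

/-! ### Convex analysis helpers -/

section ConvexHelpers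
open Matrix Filter

lemma hasDerivAt_line {k : ℕ} {V : (Fin k → ℝ) → ℝ} {s y : Fin k → ℝ}
    (hV : HasFDerivAt V (dotCLM s) y) (d : Fin k → ℝ) :
    HasDerivAt (fun t : ℝ => V (y + t • d)) (s ⬝ᵥ d) 0 := by
  have hc : HasDerivAt (fun t : ℝ => y + t • d) d 0 := by
    simpa using ((hasDerivAt_id (0 : ℝ)).smul_const d).const_add y
  have hV' : HasFDerivAt V (dotCLM s) ((fun t : ℝ => y + t • d) 0) := by
    simpa using hV
  have := hV'.comp_hasDerivAt 0 hc
  exact this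

lemma grad_ineq {k : ℕ} {V : (Fin k → ℝ) → ℝ} {dV : Set (Fin k → ℝ)}
    (hcv : ConvexOn ℝ dV V) {y s : Fin k → ℝ} (hy : y ∈ dV)
    (hV : HasFDerivAt V (dotCLM s) y) {y' : Fin k → ℝ} (hy' : y' ∈ dV) :
    s ⬝ᵥ (y' - y) ≤ V y' - V y := by
  have hd := hasDerivAt_line hV (y' - y)
  have hslope := hasDerivAt_iff_tendsto_slope.mp hd
  have hslope' : Tendsto (slope (fun t : ℝ => V (y + t • (y' - y))) 0)
      (nhdsWithin 0 (Set.Ioi 0)) (nhds (s ⬝ᵥ (y' - y))) :=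
    hslope.mono_left (nhdsWithin_mono 0 (fun t ht => ne_of_gt ht))
  refine le_of_tendsto hslope' ?_
  filter_upwards [Ioc_mem_nhdsGT_of_mem
    (show (0 : ℝ) ∈ Set.Ico (0 : ℝ) 1 by constructor <;> norm_num)] with t ht
  obtain ⟨ht0, ht1⟩ := ht
  have hcomb : y + t • (y' - y) = (1 - t) • y + t • y' := by module
  have hVle : V (y + t • (y' - y)) ≤ (1 - t) * V y + t * V y' := by
    rw [hcomb]
    have := hcv.2 hy hy' (by linarith : (0:ℝ) ≤ 1 - t) ht0.le (by ring)
    simpa [smul_eq_mul] using this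
  rw [slope_def_field]
  simp only [sub_zero, zero_smul, add_zero]
  rw [div_le_iff₀ ht0]
  nlinarith [hVle]

lemma fenchel_young {m : ℕ} {V Vs : (Fin m → ℝ) → ℝ} {dV dVs : Set (Fin m → ℝ)}
    (hconj : isConjugate V dV Vs dVs) {y σ : Fin m → ℝ} (hy : y ∈ dV) (hσ : σ ∈ dVs) :
    y ⬝ᵥ σ - V y ≤ Vs σ := by
  obtain ⟨hd, hs⟩ := hconj
  rw [hs σ hσ]
  have hbdd : BddAbove ((fun y => y ⬝ᵥ σ - V y) '' dV) := by
    rw [hd] at hσ; exact hσ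
  exact le_csSup hbdd ⟨y, hy, rfl⟩

lemma conj_at_grad {m : ℕ} {V Vs : (Fin m → ℝ) → ℝ} {dV dVs : Set (Fin m → ℝ)}
    (hcv : ConvexOn ℝ dV V) (hconj : isConjugate V dV Vs dVs) {y s : Fin m → ℝ}
    (hy : y ∈ interior dV) (hV : HasFDerivAt V (dotCLM s) y) :
    s ∈ dVs ∧ Vs s = y ⬝ᵥ s - V y := by
  have hub : ∀ z ∈ (fun y' => y' ⬝ᵥ s - V y') '' dV, z ≤ y ⬝ᵥ s - V y := by
    rintro z ⟨y', hy', rfl⟩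
    have hgi := grad_ineq hcv (interior_subset hy) hV hy'
    have hdot : s ⬝ᵥ (y' - y) = y' ⬝ᵥ s - y ⬝ᵥ s := by
      rw [dotProduct_sub, dotProduct_comm s y', dotProduct_comm s y]
    simp only at hgi hdot ⊢
    linarith [hdot ▸ hgi]
  have hbdd : BddAbove ((fun y' => y' ⬝ᵥ s - V y') '' dV) := ⟨_, fun z hz => hub z hz⟩
  have hmem : s ∈ dVs := by rw [hconj.1]; exact hbdd
  refine ⟨hmem, ?_⟩
  rw [hconj.2 s hmem]
  exact le_antisymm (csSup_le ⟨_, ⟨y, interior_subset hy, rfl⟩⟩ hub)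
    (le_csSup hbdd ⟨y, interior_subset hy, rfl⟩)

lemma subgrad_unique {k : ℕ} {V : (Fin k → ℝ) → ℝ} {dV : Set (Fin k → ℝ)}
    {y s σ : Fin k → ℝ} (hy : y ∈ interior dV)
    (hV : HasFDerivAt V (dotCLM s) y)
    (hσ : ∀ y' ∈ dV, σ ⬝ᵥ (y' - y) ≤ V y' - V y) : σ = s := by
  obtain ⟨ε, hε, hball⟩ := Metric.mem_nhds_iff.mp (mem_interior_iff_mem_nhds.mp hy)
  have key : ∀ d : Fin k → ℝ, σ ⬝ᵥ d ≤ s ⬝ᵥ d := by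
    intro d
    have hd := hasDerivAt_line hV d
    have hslope := hasDerivAt_iff_tendsto_slope.mp hd
    have hslope' : Tendsto (slope (fun t : ℝ => V (y + t • d)) 0)
        (nhdsWithin 0 (Set.Ioi 0)) (nhds (s ⬝ᵥ d)) :=
      hslope.mono_left (nhdsWithin_mono 0 (fun t ht => ne_of_gt ht))
    refine ge_of_tendsto hslope' ?_
    have hδ : 0 < ε / (‖d‖ + 1) := by positivity
    filter_upwards [Ioo_mem_nhdsGT_of_mem
      (show (0 : ℝ) ∈ Set.Ico (0 : ℝ) (ε / (‖d‖ + 1)) from ⟨le_refl _, hδ⟩)] with t ht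
    obtain ⟨ht0, ht1⟩ := ht
    have hmem : y + t • d ∈ dV := by
      apply hball
      rw [Metric.mem_ball, dist_eq_norm, add_sub_cancel_left, norm_smul, Real.norm_eq_abs,
        abs_of_pos ht0]
      calc t * ‖d‖ ≤ t * (‖d‖ + 1) := by nlinarith
        _ < ε / (‖d‖ + 1) * (‖d‖ + 1) := by
            refine mul_lt_mul_of_pos_right ht1 (by positivity)
        _ = ε := by field_simp
    have hineq := hσ _ hmem
    have hsub : y + t • d - y = t • d := by abel
    rw [hsub] at hineq
    have hts : σ ⬝ᵥ (t • d) = t * (σ ⬝ᵥ d) := by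
      rw [dotProduct_smul, smul_eq_mul]
    rw [slope_def_field]
    simp only [sub_zero, zero_smul, add_zero]
    rw [le_div_iff₀ ht0]
    rw [hts] at hineq
    nlinarith [hineq]
  funext j
  have h1 := key (Pi.single j 1)
  have h2 := key (-Pi.single j 1)
  have e1 : ∀ w : Fin k → ℝ, w ⬝ᵥ Pi.single j 1 = w j := by
    intro w
    simp [dotProduct, Pi.single_apply]
  have e2 : ∀ w : Fin k → ℝ, w ⬝ᵥ (-Pi.single j 1) = -w j := by
    intro w
    rw [dotProduct_neg, e1]
  rw [e1, e1] at h1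
  rw [e2, e2] at h2
  linarith

end ConvexHelpers

/-! ### Problem-specific matrix and continuity helpers -/

section ProblemHelpers
open Matrix Filter

lemma sum_mulVec' {k l : ℕ} {ι : Type*} (s : Finset ι) (M : ι → Matrix (Fin k) (Fin l) ℝ)
    (v : Fin l → ℝ) : (∑ i ∈ s, M i) *ᵥ v = ∑ i ∈ s, (M i) *ᵥ v := by
  funext j
  simp only [Matrix.mulVec, dotProduct, Finset.sum_apply, Matrix.sum_apply,
    Finset.sum_mul]
  rw [Finset.sum_comm]

lemma sum_dotProduct' {k : ℕ} {ι : Type*} (s : Finset ι) (w : ι → Fin k → ℝ)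
    (v : Fin k → ℝ) : (∑ i ∈ s, w i) ⬝ᵥ v = ∑ i ∈ s, (w i) ⬝ᵥ v := by
  simp only [dotProduct, Finset.sum_apply, Finset.sum_mul]
  rw [Finset.sum_comm]

lemma Amat_isSymm {n m : ℕ} {A0 : Matrix (Fin n) (Fin n) ℝ}
    {A : Fin m → Matrix (Fin n) (Fin n) ℝ} (hA0 : A0.IsSymm) (hA : ∀ i, (A i).IsSymm)
    (σ : Fin m → ℝ) : (Amat A0 A σ).IsSymm := by
  unfold Matrix.IsSymm Amat
  rw [Matrix.transpose_add, Matrix.transpose_sum]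
  rw [hA0.eq]
  congr 1
  exact Finset.sum_congr rfl fun i _ => by rw [Matrix.transpose_smul, (hA i).eq]

lemma Amat_apply {n m : ℕ} (A0 : Matrix (Fin n) (Fin n) ℝ)
    (A : Fin m → Matrix (Fin n) (Fin n) ℝ) (σ : Fin m → ℝ) (i j : Fin n) :
    Amat A0 A σ i j = A0 i j + ∑ k, σ k * A k i j := by
  simp [Amat, Finset.sum_apply, Matrix.sum_apply]

lemma cont_Amat {n m : ℕ} (A0 : Matrix (Fin n) (Fin n) ℝ)
    (A : Fin m → Matrix (Fin n) (Fin n) ℝ) : Continuous fun σ => Amat A0 A σ := by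
  refine continuous_matrix fun i j => ?_
  simp only [Amat_apply]
  exact continuous_const.add (continuous_finset_sum _ fun k _ =>
    (continuous_apply k).mul continuous_const)

lemma cont_bvec {n m : ℕ} (b0 : Fin n → ℝ) (b : Fin m → Fin n → ℝ) :
    Continuous fun σ => bvec b0 b σ := by
  refine continuous_pi fun j => ?_
  have : (fun σ => bvec b0 b σ j) = fun σ => b0 j + ∑ k, σ k * b k j := by
    funext σ
    simp [bvec, Finset.sum_apply]
  rw [this]
  exact continuous_const.add (continuous_finset_sum _ fun k _ =>
    (continuous_apply k).mul continuous_const)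

lemma quad_abs_le {k : ℕ} (B : Matrix (Fin k) (Fin k) ℝ) (z : Fin k → ℝ) :
    |z ⬝ᵥ B *ᵥ z| ≤ (∑ i, ∑ j, |B i j|) * (z ⬝ᵥ z) := by
  have key : z ⬝ᵥ B *ᵥ z = ∑ i, ∑ j, z i * (B i j * z j) := by
    simp only [dotProduct, Matrix.mulVec, Finset.mul_sum]
  have hmax : ∀ i j : Fin k, |z i| * |z j| ≤ z ⬝ᵥ z := by
    intro i j
    have hi : z i * z i ≤ z ⬝ᵥ z :=
      Finset.single_le_sum (f := fun l => z l * z l) (fun l _ => mul_self_nonneg _)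
        (Finset.mem_univ i)
    have hj : z j * z j ≤ z ⬝ᵥ z :=
      Finset.single_le_sum (f := fun l => z l * z l) (fun l _ => mul_self_nonneg _)
        (Finset.mem_univ j)
    nlinarith [abs_nonneg (z i), abs_nonneg (z j), sq_abs (z i), sq_abs (z j),
      abs_mul_abs_self (z i), abs_mul_abs_self (z j)]
  rw [key]
  calc |∑ i, ∑ j, z i * (B i j * z j)| ≤ ∑ i, |∑ j, z i * (B i j * z j)| :=
        Finset.abs_sum_le_sum_abs _ _
    _ ≤ ∑ i, ∑ j, |z i * (B i j * z j)| :=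
        Finset.sum_le_sum fun i _ => Finset.abs_sum_le_sum_abs _ _
    _ ≤ ∑ i, ∑ j, |B i j| * (z ⬝ᵥ z) := by
        refine Finset.sum_le_sum fun i _ => Finset.sum_le_sum fun j _ => ?_
        have : |z i * (B i j * z j)| = |B i j| * (|z i| * |z j|) := by
          rw [abs_mul, abs_mul]; ring
        rw [this]
        exact mul_le_mul_of_nonneg_left (hmax i j) (abs_nonneg _)
    _ = (∑ i, ∑ j, |B i j|) * (z ⬝ᵥ z) := by
        rw [Finset.sum_mul]
        refine Finset.sum_congr rfl fun i _ => ?_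
        rw [Finset.sum_mul]

lemma negdef_nbhd {n m : ℕ} (A0 : Matrix (Fin n) (Fin n) ℝ)
    (A : Fin m → Matrix (Fin n) (Fin n) ℝ) (hA0 : A0.IsSymm) (hA : ∀ i, (A i).IsSymm)
    {σb : Fin m → ℝ} (hS : (-(Amat A0 A σb)).PosDef) :
    ∃ W ∈ nhds σb, ∀ σ ∈ W, (-(Amat A0 A σ)).PosDef := by
  obtain ⟨c, hc, hlow⟩ := posdef_lower hS
  set φ : (Fin m → ℝ) → ℝ := fun σ => ∑ i, ∑ j, |Amat A0 A σb i j - Amat A0 A σ i j|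
    with hφdef
  have hφcont : Continuous φ := by
    refine continuous_finset_sum _ fun i _ => continuous_finset_sum _ fun j _ => ?_
    refine Continuous.abs (Continuous.sub continuous_const ?_)
    simp only [Amat_apply]
    exact continuous_const.add (continuous_finset_sum _ fun k _ =>
      (continuous_apply k).mul continuous_const)
  have hφσb : φ σb = 0 := by simp [hφdef]
  refine ⟨φ ⁻¹' Set.Iio c, (isOpen_Iio.preimage hφcont).mem_nhds (by
    simp [hφσb, hc]), fun σ hσ => ?_⟩
  have hφσ : φ σ < c := hσ
  refine Matrix.PosDef.of_dotProduct_mulVec_pos ?_ ?_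
  · exact ((Amat_isSymm hA0 hA σ) : (Amat A0 A σ).IsHermitian).neg
  · intro x hx
    have hstar : star x = x := by
      funext i; simp
    rw [hstar]
    have hsplit : -(Amat A0 A σ) = -(Amat A0 A σb) + (Amat A0 A σb - Amat A0 A σ) := by
      abel
    rw [hsplit, Matrix.add_mulVec, dotProduct_add]
    have h1 := hlow x
    have h2 : |x ⬝ᵥ (Amat A0 A σb - Amat A0 A σ) *ᵥ x| ≤ φ σ * (x ⬝ᵥ x) := by
      have := quad_abs_le (Amat A0 A σb - Amat A0 A σ) x
      simpa [hφdef, Matrix.sub_apply] using this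
    have h3 := abs_le.mp h2
    have h4 : 0 < x ⬝ᵥ x := dot_pos' hx
    nlinarith [h3.1]

lemma negdef_isUnit_det {k : ℕ} {M : Matrix (Fin k) (Fin k) ℝ} (h : (-M).PosDef) :
    IsUnit M.det := by
  have hpos := h.det_pos
  rw [Matrix.det_neg] at hpos
  refine isUnit_iff_ne_zero.mpr fun h0 => ?_
  rw [h0, mul_zero] at hpos
  exact lt_irrefl 0 hpos

lemma contAt_xofσ {n m : ℕ} (A0 : Matrix (Fin n) (Fin n) ℝ)
    (A : Fin m → Matrix (Fin n) (Fin n) ℝ) (b0 : Fin n → ℝ) (b : Fin m → Fin n → ℝ)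
    {σb : Fin m → ℝ} (hdet : IsUnit (Amat A0 A σb).det) :
    ContinuousAt (xofσ A0 A b0 b) σb := by
  have heq : xofσ A0 A b0 b = fun σ =>
      ((Amat A0 A σ).det)⁻¹ • ((Amat A0 A σ).adjugate *ᵥ bvec b0 b σ) := by
    funext σ
    rw [xofσ, Matrix.inv_def, Ring.inverse_eq_inv', Matrix.smul_mulVec]
  rw [heq]
  have hdetne : (Amat A0 A σb).det ≠ 0 := by
    intro h0
    rw [h0] at hdet
    exact (by simpa using hdet : IsUnit (0:ℝ)).ne_zero rfl
  refine ContinuousAt.fun_smul ?_ ?_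
  · exact ((cont_Amat A0 A).matrix_det.continuousAt).inv₀ hdetne
  · exact ((cont_Amat A0 A).matrix_adjugate.matrix_mulVec (cont_bvec b0 b)).continuousAt

lemma P_eq {n m : ℕ} (A0 : Matrix (Fin n) (Fin n) ℝ) (A : Fin m → Matrix (Fin n) (Fin n) ℝ)
    (b0 : Fin n → ℝ) (b : Fin m → Fin n → ℝ) (c : Fin m → ℝ) (σ : Fin m → ℝ)
    (x : Fin n → ℝ) :
    qf A0 b0 0 x + qvec A b c x ⬝ᵥ σ =
      (1 / 2) * (x ⬝ᵥ (Amat A0 A σ) *ᵥ x) - (bvec b0 b σ) ⬝ᵥ x + c ⬝ᵥ σ := by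
  have h1 : qvec A b c x ⬝ᵥ σ =
      ∑ i, σ i * ((1 / 2) * (x ⬝ᵥ (A i) *ᵥ x)) - ∑ i, σ i * ((b i) ⬝ᵥ x)
        + ∑ i, σ i * c i := by
    rw [show qvec A b c x ⬝ᵥ σ = ∑ i, (qf (A i) (b i) (c i) x) * σ i from rfl]
    rw [← Finset.sum_sub_distrib, ← Finset.sum_add_distrib]
    refine Finset.sum_congr rfl fun i _ => ?_
    rw [qf]
    ring
  have h2 : x ⬝ᵥ (Amat A0 A σ) *ᵥ x = x ⬝ᵥ A0 *ᵥ x + ∑ i, σ i * (x ⬝ᵥ (A i) *ᵥ x) := by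
    rw [Amat, Matrix.add_mulVec, dotProduct_add, sum_mulVec']
    congr 1
    rw [show (∑ i, (σ i • A i) *ᵥ x) = ∑ i, σ i • ((A i) *ᵥ x) from
      Finset.sum_congr rfl fun i _ => Matrix.smul_mulVec _ _ _]
    rw [show x ⬝ᵥ (∑ i, σ i • ((A i) *ᵥ x)) = (∑ i, σ i • ((A i) *ᵥ x)) ⬝ᵥ x from
      dotProduct_comm _ _]
    rw [sum_dotProduct']
    refine Finset.sum_congr rfl fun i _ => ?_
    rw [smul_dotProduct, smul_eq_mul, dotProduct_comm]
  have h3 : bvec b0 b σ ⬝ᵥ x = b0 ⬝ᵥ x + ∑ i, σ i * ((b i) ⬝ᵥ x) := by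
    rw [bvec, add_dotProduct, sum_dotProduct']
    congr 1
    exact Finset.sum_congr rfl fun i _ => by rw [smul_dotProduct, smul_eq_mul]
  have h4 : c ⬝ᵥ σ = ∑ i, σ i * c i := by
    simp [dotProduct, mul_comm]
  rw [h1, h2, h3, h4, qf]
  have h5 : ∑ i, σ i * ((1 : ℝ) / 2 * (x ⬝ᵥ (A i) *ᵥ x)) =
      1 / 2 * ∑ i, σ i * (x ⬝ᵥ (A i) *ᵥ x) := by
    rw [Finset.mul_sum]
    exact Finset.sum_congr rfl fun i _ => by ring
  rw [h5]
  ring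

lemma quad_max {n m : ℕ} {A0 : Matrix (Fin n) (Fin n) ℝ}
    {A : Fin m → Matrix (Fin n) (Fin n) ℝ} (hA0 : A0.IsSymm) (hA : ∀ i, (A i).IsSymm)
    (b0 : Fin n → ℝ) (b : Fin m → Fin n → ℝ) (c : Fin m → ℝ) {σ : Fin m → ℝ}
    (hneg : (-(Amat A0 A σ)).PosDef) (x : Fin n → ℝ) :
    qf A0 b0 0 x + qvec A b c x ⬝ᵥ σ ≤
      qf A0 b0 0 (xofσ A0 A b0 b σ) + qvec A b c (xofσ A0 A b0 b σ) ⬝ᵥ σ := by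
  have hdet := negdef_isUnit_det hneg
  set x₀ := xofσ A0 A b0 b σ with hx₀def
  set M := Amat A0 A σ with hMdef
  have hsym : Mᵀ = M := (Amat_isSymm hA0 hA σ).eq
  have hx₀ : M *ᵥ x₀ = bvec b0 b σ := by
    rw [hx₀def, xofσ, Matrix.mulVec_mulVec, Matrix.mul_nonsing_inv _ hdet, Matrix.one_mulVec]
  rw [P_eq, P_eq]
  have hsymdot : x ⬝ᵥ M *ᵥ x₀ = x₀ ⬝ᵥ M *ᵥ x := by
    rw [dot_mulVec_swap, hsym, dotProduct_comm]
  have hexp : (x - x₀) ⬝ᵥ M *ᵥ (x - x₀) =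
      x ⬝ᵥ M *ᵥ x - 2 * (x₀ ⬝ᵥ M *ᵥ x) + x₀ ⬝ᵥ M *ᵥ x₀ := by
    rw [Matrix.mulVec_sub, dotProduct_sub, sub_dotProduct,
      sub_dotProduct, hsymdot, show x₀ ⬝ᵥ M *ᵥ x = x₀ ⬝ᵥ M *ᵥ x from rfl]
    ring
  have hnonneg : 0 ≤ (x - x₀) ⬝ᵥ (-M) *ᵥ (x - x₀) := by
    rcases eq_or_ne (x - x₀) 0 with h0 | h0
    · simp [h0, Matrix.mulVec_zero]
    · have := hneg.dotProduct_mulVec_pos h0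
      have hstar : star (x - x₀) = x - x₀ := by funext i; simp
      rw [hstar] at this
      exact this.le
  rw [Matrix.neg_mulVec, dotProduct_neg] at hnonneg
  have hβx : bvec b0 b σ ⬝ᵥ x = x₀ ⬝ᵥ M *ᵥ x := by
    rw [← hx₀, dotProduct_comm, hsymdot]
  have hβx₀ : bvec b0 b σ ⬝ᵥ x₀ = x₀ ⬝ᵥ M *ᵥ x₀ := by
    rw [← hx₀, dotProduct_comm]
  rw [hβx, hβx₀]
  nlinarith [hexp, hnonneg]

end ProblemHelpers

/-! ### Derivatives of the primal objective and its gradient -/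

section PrimalHelpers
open Matrix Filter

lemma isSymm_of_isHermitian {k : ℕ} {M : Matrix (Fin k) (Fin k) ℝ}
    (h : M.IsHermitian) : Mᵀ = M := by
  ext i j
  rw [Matrix.transpose_apply]
  conv_rhs => rw [← h.eq]
  simp [Matrix.conjTranspose_apply]

lemma cont_qvec {n m : ℕ} {A : Fin m → Matrix (Fin n) (Fin n) ℝ}
    (hA : ∀ i, (A i).IsSymm) (b : Fin m → Fin n → ℝ) (c : Fin m → ℝ) :
    Continuous (qvec A b c) := by
  refine continuous_pi fun i => ?_
  rw [continuous_iff_continuousAt]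
  intro x
  exact (hasFDerivAt_qf (hA i) (b i) (c i) x).continuousAt

lemma fP_deriv {n m : ℕ} {A0 : Matrix (Fin n) (Fin n) ℝ}
    {A : Fin m → Matrix (Fin n) (Fin n) ℝ} (hA0 : A0.IsSymm) (hA : ∀ i, (A i).IsSymm)
    (b0 : Fin n → ℝ) (b : Fin m → Fin n → ℝ) (c : Fin m → ℝ)
    {V : (Fin m → ℝ) → ℝ} {dV : Set (Fin m → ℝ)} {gV : (Fin m → ℝ) → (Fin m → ℝ)}
    (hVd : ∀ y ∈ interior dV, HasFDerivAt V (dotCLM (gV y)) y)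
    {x : Fin n → ℝ} (hx : qvec A b c x ∈ interior dV) :
    HasFDerivAt (fP A0 b0 A b c V) (dotCLM (gradfP A0 b0 A b c gV x)) x := by
  have h1 := hasFDerivAt_qf hA0 b0 0 x
  have h2 := (hVd _ hx).comp x (hasFDerivAt_qvec hA b c x)
  have h3 := h1.add h2
  have heq : dotCLM (A0 *ᵥ x - b0) +
      (dotCLM (gV (qvec A b c x))).comp (matCLM (Gmat A b x)) =
      dotCLM (gradfP A0 b0 A b c gV x) := by
    refine ContinuousLinearMap.ext fun v => ?_
    simp only [ContinuousLinearMap.add_apply, ContinuousLinearMap.coe_comp',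
      Function.comp_apply, dotCLM_apply, matCLM_apply]
    have hr : gV (qvec A b c x) ⬝ᵥ (Gmat A b x *ᵥ v) =
        ∑ i, gV (qvec A b c x) i * ((A i *ᵥ x - b i) ⬝ᵥ v) := rfl
    have hl : gradfP A0 b0 A b c gV x ⬝ᵥ v =
        (A0 *ᵥ x - b0) ⬝ᵥ v + ∑ i, gV (qvec A b c x) i * ((A i *ᵥ x - b i) ⬝ᵥ v) := by
      rw [gradfP, add_dotProduct, sum_dotProduct']
      congr 1
      exact Finset.sum_congr rfl fun i _ => by
        rw [smul_dotProduct, smul_eq_mul]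
    rw [hl, hr]
  rw [heq] at h3
  exact h3

lemma gradfP_deriv {n m : ℕ} {A0 : Matrix (Fin n) (Fin n) ℝ}
    {A : Fin m → Matrix (Fin n) (Fin n) ℝ} (hA : ∀ i, (A i).IsSymm)
    (b0 : Fin n → ℝ) (b : Fin m → Fin n → ℝ) (c : Fin m → ℝ)
    {dV : Set (Fin m → ℝ)} {gV : (Fin m → ℝ) → (Fin m → ℝ)}
    {MV : (Fin m → ℝ) → Matrix (Fin m) (Fin m) ℝ}
    (hMV : ∀ y ∈ interior dV, HasFDerivAt gV (matCLM (MV y)) y)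
    {xb : Fin n → ℝ} (hX0 : qvec A b c xb ∈ interior dV) :
    HasFDerivAt (gradfP A0 b0 A b c gV)
      (matCLM (Amat A0 A (gV (qvec A b c xb)) +
        (Gmat A b xb)ᵀ * MV (qvec A b c xb) * Gmat A b xb)) xb := by
  set q0 := qvec A b c xb with hq0
  set G := Gmat A b xb with hG
  set W := MV q0 * G with hW
  have hgq : HasFDerivAt (fun x => gV (qvec A b c x)) (matCLM W) xb := by
    have h := (hMV _ hX0).comp xb (hasFDerivAt_qvec hA b c xb)
    have heq : (matCLM (MV q0)).comp (matCLM G) = matCLM W := by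
      refine ContinuousLinearMap.ext fun v => ?_
      simp only [ContinuousLinearMap.coe_comp', Function.comp_apply, matCLM_apply]
      rw [Matrix.mulVec_mulVec, hW]
    rw [← heq]
    exact h
  have hcomp : ∀ i, HasFDerivAt (fun x => gV (qvec A b c x) i) (dotCLM (W i)) xb := by
    intro i
    have hpi : matCLM W = ContinuousLinearMap.pi (fun i => dotCLM (W i)) := by
      refine ContinuousLinearMap.ext fun v => funext fun i => rfl
    rw [hpi] at hgq
    exact hasFDerivAt_pi.mp hgq i
  have hterm : ∀ i : Fin m, HasFDerivAt
      (fun x => gV (qvec A b c x) i • ((A i) *ᵥ x - b i))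
      ((gV q0 i) • (matCLM (A i)) + (dotCLM (W i)).smulRight ((A i) *ᵥ xb - b i)) xb := by
    intro i
    have hlin : HasFDerivAt (fun x : Fin n → ℝ => (A i) *ᵥ x - b i) (matCLM (A i)) xb := by
      simpa using ((matCLM (A i)).hasFDerivAt (x := xb)).sub_const (b i)
    exact (hcomp i).smul hlin
  have hsum := HasFDerivAt.sum (fun i (_ : i ∈ Finset.univ) => hterm i)
  have haff : HasFDerivAt (fun x : Fin n → ℝ => A0 *ᵥ x - b0) (matCLM A0) xb := by
    simpa using ((matCLM A0).hasFDerivAt (x := xb)).sub_const b0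
  have htot := haff.add hsum
  have heq2 : matCLM A0 + ∑ i, ((gV q0 i) • matCLM (A i) +
      (dotCLM (W i)).smulRight ((A i) *ᵥ xb - b i)) =
      matCLM (Amat A0 A (gV q0) + Gᵀ * MV q0 * G) := by
    refine ContinuousLinearMap.ext fun v => ?_
    simp only [ContinuousLinearMap.add_apply, ContinuousLinearMap.sum_apply,
      ContinuousLinearMap.smul_apply, ContinuousLinearMap.smulRight_apply, dotCLM_apply,
      matCLM_apply]
    rw [Matrix.add_mulVec]
    have hGE : (Gᵀ * MV q0 * G) *ᵥ v = Gᵀ *ᵥ (W *ᵥ v) := by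
      rw [hW, Matrix.mulVec_mulVec, Matrix.mul_assoc]
    rw [hGE, transpose_mulVec_eq_sum]
    rw [Amat, Matrix.add_mulVec, sum_mulVec']
    rw [Finset.sum_add_distrib]
    have hX : ∀ i : Fin m, (gV q0 i • A i) *ᵥ v = gV q0 i • (A i *ᵥ v) :=
      fun i => Matrix.smul_mulVec _ _ _
    have hY : ∀ i : Fin m, (W *ᵥ v) i • G i = (W i ⬝ᵥ v) • ((A i) *ᵥ xb - b i) :=
      fun i => rfl
    rw [show (∑ i, (gV q0 i • A i) *ᵥ v) = ∑ i, gV q0 i • (A i *ᵥ v) from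
      Finset.sum_congr rfl fun i _ => hX i]
    rw [show (∑ i, (W *ᵥ v) i • G i) = ∑ i, (W i ⬝ᵥ v) • ((A i) *ᵥ xb - b i) from
      Finset.sum_congr rfl fun i _ => hY i]
    abel
  rw [heq2] at htot
  have hfun : gradfP A0 b0 A b c gV = (fun x => A0 *ᵥ x - b0) +
      ∑ i, fun x => gV (qvec A b c x) i • (A i *ᵥ x - b i) := by
    funext x
    simp [gradfP, Finset.sum_apply]
  rw [hfun]
  exact htot

lemma gradfP_crit {n m : ℕ} {A0 : Matrix (Fin n) (Fin n) ℝ}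
    {A : Fin m → Matrix (Fin n) (Fin n) ℝ} {b0 : Fin n → ℝ} {b : Fin m → Fin n → ℝ}
    {c : Fin m → ℝ} {gV : (Fin m → ℝ) → (Fin m → ℝ)} {xb : Fin n → ℝ} {σb : Fin m → ℝ}
    (hcrit1 : Amat A0 A σb *ᵥ xb = bvec b0 b σb) (hcrit2 : σb = gV (qvec A b c xb)) :
    gradfP A0 b0 A b c gV xb = 0 := by
  have h := hcrit1
  rw [Amat, bvec, Matrix.add_mulVec, sum_mulVec'] at h
  funext j
  have hj := congrFun h j
  rw [gradfP, ← hcrit2]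
  simp only [Pi.add_apply, Pi.sub_apply, Finset.sum_apply, Pi.smul_apply, smul_eq_mul,
    Pi.zero_apply, Matrix.smul_mulVec] at hj ⊢
  have hsplit : ∑ i, σb i * ((A i *ᵥ xb) j - b i j) =
      ∑ i, σb i * (A i *ᵥ xb) j - ∑ i, σb i * b i j := by
    rw [← Finset.sum_sub_distrib]
    exact Finset.sum_congr rfl fun i _ => by ring
  rw [hsplit]
  linarith

lemma contract_lt {k l : ℕ} (Hm : Matrix (Fin k) (Fin l) ℝ)
    (h : ∀ v, v ⬝ᵥ v = 1 → (Hm *ᵥ v) ⬝ᵥ (Hm *ᵥ v) < 1) :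
    ∃ ρ, 0 ≤ ρ ∧ ρ < 1 ∧ ∀ v, (Hm *ᵥ v) ⬝ᵥ (Hm *ᵥ v) ≤ ρ * (v ⬝ᵥ v) := by
  rcases Nat.eq_zero_or_pos l with hl | hl
  · subst hl
    refine ⟨0, le_refl _, zero_lt_one, fun v => ?_⟩
    have hv : v = 0 := funext fun i => i.elim0
    simp [hv, Matrix.mulVec_zero]
  · have hcont : Continuous fun v : Fin l → ℝ => -((Hm *ᵥ v) ⬝ᵥ (Hm *ᵥ v)) := by
      refine Continuous.neg ?_
      exact cont_dot.comp (Continuous.matrix_mulVec continuous_const continuous_id)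
    obtain ⟨v₀, hv₀, hmin⟩ := exists_min_on_sphere hl _ hcont
    refine ⟨(Hm *ᵥ v₀) ⬝ᵥ (Hm *ᵥ v₀), dot_nonneg' _, h v₀ hv₀, ?_⟩
    refine scale_bound Hm (dot_nonneg' _) fun v hv => ?_
    have := hmin v hv
    simp only [neg_le_neg_iff] at this
    linarith

end PrimalHelpers

/-- If `x̄` is a local maximizer of `f` (on `dom f`) or `σ̄` is a local
maximizer of `D` (on `S⁻`), then `‖Hv‖ ≤ 1` for all unit `v`. Conversely, if `‖Hv‖ < 1` for
all unit `v`, then `x̄` and `σ̄` are strict local maximizers of `f` and `D` respectively; in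
particular this holds when `A_i x̄ = b_i` for all `i`. -/
theorem statement14 {n m : ℕ}
    (A0 : Matrix (Fin n) (Fin n) ℝ) (A : Fin m → Matrix (Fin n) (Fin n) ℝ)
    (b0 : Fin n → ℝ) (b : Fin m → Fin n → ℝ) (c : Fin m → ℝ)
    (hA0 : A0.IsSymm) (hA : ∀ i, (A i).IsSymm)
    (V Vs : (Fin m → ℝ) → ℝ) (dV dVs : Set (Fin m → ℝ))
    (gV gVs : (Fin m → ℝ) → (Fin m → ℝ)) (MV : (Fin m → ℝ) → Matrix (Fin m) (Fin m) ℝ)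
    (hV : properLscConvex V dV) (hLeg : LegendreType V dV gV)
    (hMV : ∀ y ∈ interior dV, HasFDerivAt gV (matCLM (MV y)) y)
    (hMVpos : ∀ y ∈ interior dV, (MV y).PosDef)
    (hconj : isConjugate V dV Vs dVs)
    (hgVs : ∀ σ ∈ interior dVs, HasFDerivAt Vs (dotCLM (gVs σ)) σ)
    (xb : Fin n → ℝ) (σb : Fin m → ℝ)
    (hX0 : qvec A b c xb ∈ interior dV)
    (hσint : σb ∈ interior dVs)
    (hSneg : (-(Amat A0 A σb)).PosDef)
    (hcrit1 : Amat A0 A σb *ᵥ xb = bvec b0 b σb)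
    (hcrit2 : σb = gV (qvec A b c xb))
    (E : Matrix (Fin n) (Fin n) ℝ) (hE : IsUnit E.det)
    (hEA : Eᵀ * E = -(Amat A0 A σb))
    (F : Matrix (Fin m) (Fin m) ℝ) (hF : IsUnit F.det)
    (hFV : Fᵀ * F = MV (qvec A b c xb))
    :
    (IsLocalMaxOn (fP A0 b0 A b c V) {x | qvec A b c x ∈ dV} xb →
      ∀ v : Fin m → ℝ, v ⬝ᵥ v = 1 →
        (Hmat A b E F xb *ᵥ v) ⬝ᵥ (Hmat A b E F xb *ᵥ v) ≤ 1) ∧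
    (IsLocalMaxOn (Dfun A0 b0 A b c Vs) {σ | σ ∈ dVs ∧ (-(Amat A0 A σ)).PosDef} σb →
      ∀ v : Fin m → ℝ, v ⬝ᵥ v = 1 →
        (Hmat A b E F xb *ᵥ v) ⬝ᵥ (Hmat A b E F xb *ᵥ v) ≤ 1) ∧
    ((∀ v : Fin m → ℝ, v ⬝ᵥ v = 1 →
        (Hmat A b E F xb *ᵥ v) ⬝ᵥ (Hmat A b E F xb *ᵥ v) < 1) →
      IsStrictLocalMaxOn (fP A0 b0 A b c V) {x | qvec A b c x ∈ dV} xb ∧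
      IsStrictLocalMaxOn (Dfun A0 b0 A b c Vs)
        {σ | σ ∈ dVs ∧ (-(Amat A0 A σ)).PosDef} σb) ∧
    ((∀ i, (A i) *ᵥ xb = b i) →
      IsStrictLocalMaxOn (fP A0 b0 A b c V) {x | qvec A b c x ∈ dV} xb ∧
      IsStrictLocalMaxOn (Dfun A0 b0 A b c Vs)
        {σ | σ ∈ dVs ∧ (-(Amat A0 A σ)).PosDef} σb) := by
  classical
  -- abbreviations
  have hVd := hLeg.2.1
  have hcv := hV.2.1
  have hU0 : IsOpen ((qvec A b c) ⁻¹' interior dV) :=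
    isOpen_interior.preimage (cont_qvec hA b c)
  have hMVsym : (MV (qvec A b c xb))ᵀ = MV (qvec A b c xb) :=
    isSymm_of_isHermitian (hMVpos _ hX0).1
  -- the Hessian of f at xb
  set Qm : Matrix (Fin n) (Fin n) ℝ :=
    Amat A0 A σb + (Gmat A b xb)ᵀ * MV (qvec A b c xb) * Gmat A b xb with hQmdef
  have hQsym : Qmᵀ = Qm := by
    rw [hQmdef, Matrix.transpose_add, (Amat_isSymm hA0 hA σb).eq, Matrix.transpose_mul,
      Matrix.transpose_mul, Matrix.transpose_transpose, hMVsym, Matrix.mul_assoc]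
  -- derivative facts
  have hg : HasFDerivAt (gradfP A0 b0 A b c gV) (matCLM Qm) xb := by
    have h := gradfP_deriv (A0 := A0) hA b0 b c hMV hX0
    rw [← hcrit2] at h
    exact h
  have hga : gradfP A0 b0 A b c gV xb = 0 := gradfP_crit hcrit1 hcrit2
  -- matrix identities
  have hAm : Amat A0 A σb = -(Eᵀ * E) := by rw [hEA, neg_neg]
  have hJ : Jmat A b E xb = (E⁻¹)ᵀ * (Gmat A b xb)ᵀ := by
    ext i k
    simp [Jmat, Gmat, Matrix.mul_apply, Matrix.mulVec, dotProduct,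
      Matrix.transpose_apply]
  have hHmT : (Hmat A b E F xb)ᵀ = F * (Gmat A b xb * E⁻¹) := by
    rw [Hmat, Matrix.transpose_mul, Matrix.transpose_transpose, hJ, Matrix.transpose_mul,
      Matrix.transpose_transpose, Matrix.transpose_transpose]
  have hHE : ∀ u : Fin n → ℝ,
      (Hmat A b E F xb)ᵀ *ᵥ (E *ᵥ u) = F *ᵥ (Gmat A b xb *ᵥ u) := by
    intro u
    rw [hHmT, Matrix.mulVec_mulVec, Matrix.mul_assoc, Matrix.mul_assoc,
      Matrix.nonsing_inv_mul E hE, Matrix.mul_one, ← Matrix.mulVec_mulVec]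
  have hGram : (Gmat A b xb)ᵀ * MV (qvec A b c xb) * Gmat A b xb =
      (F * Gmat A b xb)ᵀ * (F * Gmat A b xb) := by
    rw [← hFV, Matrix.transpose_mul]
    simp only [Matrix.mul_assoc]
  have hquad : ∀ u : Fin n → ℝ, u ⬝ᵥ Qm *ᵥ u =
      -((E *ᵥ u) ⬝ᵥ (E *ᵥ u)) +
        ((Hmat A b E F xb)ᵀ *ᵥ (E *ᵥ u)) ⬝ᵥ ((Hmat A b E F xb)ᵀ *ᵥ (E *ᵥ u)) := by
    intro u
    rw [hHE u, hQmdef, Matrix.add_mulVec, dotProduct_add]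
    congr 1
    · rw [hAm, Matrix.neg_mulVec, dotProduct_neg, dot_gram]
    · rw [hGram, dot_gram, ← Matrix.mulVec_mulVec]
  -- dual basic facts
  have hdetb : IsUnit (Amat A0 A σb).det := negdef_isUnit_det hSneg
  have hxσb : xofσ A0 A b0 b σb = xb := by
    rw [xofσ, ← hcrit1, Matrix.mulVec_mulVec, Matrix.nonsing_inv_mul _ hdetb,
      Matrix.one_mulVec]
  have hVsσb : σb ∈ dVs ∧ Vs σb = qvec A b c xb ⬝ᵥ σb - V (qvec A b c xb) := by
    have h := conj_at_grad hcv hconj hX0 (hVd _ hX0)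
    rw [← hcrit2] at h
    exact h
  have hDσb : Dfun A0 b0 A b c Vs σb = fP A0 b0 A b c V xb := by
    rw [Dfun, hxσb, hVsσb.2, fP]
    ring
  -- ################ Conjunct 1 ################
  have key1 : IsLocalMaxOn (fP A0 b0 A b c V) {x | qvec A b c x ∈ dV} xb →
      ∀ v : Fin m → ℝ, v ⬝ᵥ v = 1 →
        (Hmat A b E F xb *ᵥ v) ⬝ᵥ (Hmat A b E F xb *ᵥ v) ≤ 1 := by
    intro hmax v hv
    have hmem : {x | fP A0 b0 A b c V x ≤ fP A0 b0 A b c V xb} ∈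
        nhdsWithin xb {x | qvec A b c x ∈ dV} := hmax
    rw [mem_nhdsWithin] at hmem
    obtain ⟨u, huo, hxu, husub⟩ := hmem
    have hnb : (u ∩ (qvec A b c) ⁻¹' interior dV) ∈ nhds xb :=
      (huo.inter hU0).mem_nhds ⟨hxu, hX0⟩
    obtain ⟨r, hr, hball⟩ := Metric.mem_nhds_iff.mp hnb
    have hf : ∀ x ∈ Metric.ball xb r,
        HasFDerivAt (fP A0 b0 A b c V) (dotCLM (gradfP A0 b0 A b c gV x)) x :=
      fun x hx => fP_deriv hA0 hA b0 b c hVd (hball hx).2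
    have hmax' : ∀ x ∈ Metric.ball xb r, fP A0 b0 A b c V x ≤ fP A0 b0 A b c V xb :=
      fun x hx => husub ⟨(hball hx).1, show qvec A b c x ∈ dV from
        interior_subset (s := dV) (hball hx).2⟩
    have hns := negsemidef_of_localmax hQsym hr hf hg hga hr hmax'
    have hw : ∀ w : Fin n → ℝ, ((Hmat A b E F xb)ᵀ *ᵥ w) ⬝ᵥ ((Hmat A b E F xb)ᵀ *ᵥ w) ≤
        1 * (w ⬝ᵥ w) := by
      intro w
      have hu2 := hns (E⁻¹ *ᵥ w)
      have hEw : E *ᵥ (E⁻¹ *ᵥ w) = w := by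
        rw [Matrix.mulVec_mulVec, Matrix.mul_nonsing_inv E hE, Matrix.one_mulVec]
      rw [hquad, hEw] at hu2
      rw [one_mul]
      linarith
    have htr := aux_transfer (Hmat A b E F xb)ᵀ zero_le_one hw
    rw [Matrix.transpose_transpose] at htr
    have hv2 := htr v
    rw [hv, mul_one] at hv2
    exact hv2
  -- ################ Conjunct 3 ################
  have key3 : (∀ v : Fin m → ℝ, v ⬝ᵥ v = 1 →
      (Hmat A b E F xb *ᵥ v) ⬝ᵥ (Hmat A b E F xb *ᵥ v) < 1) →
      IsStrictLocalMaxOn (fP A0 b0 A b c V) {x | qvec A b c x ∈ dV} xb ∧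
      IsStrictLocalMaxOn (Dfun A0 b0 A b c Vs)
        {σ | σ ∈ dVs ∧ (-(Amat A0 A σ)).PosDef} σb := by
    intro hlt
    obtain ⟨ρ, hρ0, hρ1, hρb⟩ := contract_lt (Hmat A b E F xb) hlt
    have hwb := aux_transfer (Hmat A b E F xb) hρ0 hρb
    obtain ⟨cE, hcE, hEl⟩ := posdef_lower hSneg
    have hEl' : ∀ u : Fin n → ℝ, cE * (u ⬝ᵥ u) ≤ (E *ᵥ u) ⬝ᵥ (E *ᵥ u) := by
      intro u
      have h := hEl u
      rw [← hEA, dot_gram] at h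
      exact h
    have hc'pos : 0 < (1 - ρ) * cE := mul_pos (by linarith) hcE
    have hneg : ∀ u : Fin n → ℝ, u ⬝ᵥ Qm *ᵥ u ≤ -(((1 - ρ) * cE) * (u ⬝ᵥ u)) := by
      intro u
      rw [hquad u]
      have h1 := hwb (E *ᵥ u)
      have h2 := hEl' u
      nlinarith [dot_nonneg' (E *ᵥ u), dot_nonneg' u,
        mul_le_mul_of_nonneg_left h2 (by linarith : (0:ℝ) ≤ 1 - ρ)]
    have hnb : ((qvec A b c) ⁻¹' interior dV) ∈ nhds xb := hU0.mem_nhds hX0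
    obtain ⟨r, hr, hball⟩ := Metric.mem_nhds_iff.mp hnb
    have hf : ∀ x ∈ Metric.ball xb r,
        HasFDerivAt (fP A0 b0 A b c V) (dotCLM (gradfP A0 b0 A b c gV x)) x :=
      fun x hx => fP_deriv hA0 hA b0 b c hVd (hball hx)
    obtain ⟨U, hU, hUstrict⟩ := strict_max_of_negdef hQsym hr hf hg hga hc'pos hneg
    constructor
    · exact ⟨U, hU, fun x hx hne => hUstrict x hx.1 hne⟩
    · -- dual strict max
      have hcont := contAt_xofσ A0 A b0 b hdetb
      have hUf : (U ∩ (qvec A b c ⁻¹' interior dV)) ∈ nhds xb := Filter.inter_mem hU hnb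
      have hWpre : (xofσ A0 A b0 b) ⁻¹' (U ∩ (qvec A b c ⁻¹' interior dV)) ∈ nhds σb := by
        apply hcont.preimage_mem_nhds
        rw [hxσb]
        exact hUf
      refine ⟨_, hWpre, ?_⟩
      rintro σ ⟨hσW, hσdVs, hσneg⟩ hσne
      have hxσmem : xofσ A0 A b0 b σ ∈ U ∩ (qvec A b c ⁻¹' interior dV) := hσW
      have hFY := fenchel_young hconj (interior_subset hxσmem.2) hσdVs
      have hDle : Dfun A0 b0 A b c Vs σ ≤ fP A0 b0 A b c V (xofσ A0 A b0 b σ) := by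
        rw [Dfun, fP]
        linarith
      rcases eq_or_ne (xofσ A0 A b0 b σ) xb with hxx | hxx
      · have hVsgt : qvec A b c xb ⬝ᵥ σ - V (qvec A b c xb) < Vs σ := by
          have hFY0 := fenchel_young hconj (interior_subset hX0) hσdVs
          rcases hFY0.lt_or_eq with hlt2 | heq2
          · exact hlt2
          · exfalso
            have hsub : ∀ y' ∈ dV, σ ⬝ᵥ (y' - qvec A b c xb) ≤ V y' - V (qvec A b c xb) := by
              intro y' hy'
              have hfy := fenchel_young hconj hy' hσdVs
              have hdot : σ ⬝ᵥ (y' - qvec A b c xb) =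
                  y' ⬝ᵥ σ - qvec A b c xb ⬝ᵥ σ := by
                rw [dotProduct_sub, dotProduct_comm σ y',
                  dotProduct_comm σ (qvec A b c xb)]
              rw [hdot]
              linarith
            have := subgrad_unique hX0 (hVd _ hX0) hsub
            exact hσne (by rw [hcrit2]; exact this)
        rw [hDσb, Dfun, hxx, fP]
        linarith
      · have hflt := hUstrict _ hxσmem.1 hxx
        rw [hDσb]
        linarith
  -- ################ Conjunct 2 ################
  have key2 : IsLocalMaxOn (Dfun A0 b0 A b c Vs)
      {σ | σ ∈ dVs ∧ (-(Amat A0 A σ)).PosDef} σb →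
      IsLocalMaxOn (fP A0 b0 A b c V) {x | qvec A b c x ∈ dV} xb := by
    intro hmaxD
    have hmem : {σ | Dfun A0 b0 A b c Vs σ ≤ Dfun A0 b0 A b c Vs σb} ∈
        nhdsWithin σb {σ | σ ∈ dVs ∧ (-(Amat A0 A σ)).PosDef} := hmaxD
    rw [mem_nhdsWithin] at hmem
    obtain ⟨t, hto, hσt, htsub⟩ := hmem
    obtain ⟨Wn, hWn, hWneg⟩ := negdef_nbhd A0 A hA0 hA hSneg
    have hσcont : ContinuousAt (fun x => gV (qvec A b c x)) xb :=
      ((hMV _ hX0).continuousAt).comp (cont_qvec hA b c).continuousAt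
    have hpre : (fun x => gV (qvec A b c x)) ⁻¹' (t ∩ Wn) ∈ nhds xb := by
      apply hσcont.preimage_mem_nhds
      rw [← hcrit2]
      exact Filter.inter_mem (hto.mem_nhds hσt) hWn
    have hev : ∀ᶠ x in nhds xb, fP A0 b0 A b c V x ≤ fP A0 b0 A b c V xb := by
      filter_upwards [hpre, hU0.mem_nhds hX0] with x hx1 hx2
      have hconjx := conj_at_grad hcv hconj hx2 (hVd _ hx2)
      have hσxneg : (-(Amat A0 A (gV (qvec A b c x)))).PosDef := hWneg _ hx1.2
      have hfx : fP A0 b0 A b c V x = qf A0 b0 0 x +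
          qvec A b c x ⬝ᵥ gV (qvec A b c x) - Vs (gV (qvec A b c x)) := by
        rw [fP, hconjx.2]
        ring
      have hle1 := quad_max hA0 hA b0 b c hσxneg x
      have hle2 : Dfun A0 b0 A b c Vs (gV (qvec A b c x)) ≤ Dfun A0 b0 A b c Vs σb :=
        htsub ⟨hx1.1, hconjx.1, hσxneg⟩
      rw [hDσb] at hle2
      rw [Dfun] at hle2
      rw [hfx]
      linarith
    exact hev.filter_mono nhdsWithin_le_nhds
  -- ################ assemble ################
  refine ⟨key1, fun hD => key1 (key2 hD), key3, fun hAb => key3 ?_⟩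
  intro v hv
  have hHz : Hmat A b E F xb = 0 := by
    rw [Hmat]
    have hJz : Jmat A b E xb = 0 := by
      ext i k
      simp [Jmat, hAb, sub_self, Matrix.mulVec_zero, Matrix.zero_apply]
    rw [hJz, Matrix.zero_mul]
  rw [hHz]
  simp [Matrix.zero_mulVec]
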